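/- Certified lower bound: the optimal value d* of the reduced dual LP (D̄) satisfies d* ≤ p*, where p* is the optimal value of the polynomial optimization problem (P). Equivalently, for every feasible point (t,λ,μ) of (D̄) and every x ∈ R with a_i·x ≤ b_i (i ∈ I) and c_j·x = d_j (j ∈ J), one has t ≤ p(x). -/

import Mathlib

open Finset

/-- The normalized elementary symmetric polynomial
`B_{l,δ}(z) = binom(δ,l)⁻¹ ∑_{1≤σ₁<⋯<σ_l≤δ} z_{σ₁}⋯z_{σ_l}`. -/
noncomputable def normEsymm (δ l : ℕ) (z : Fin δ → ℝ) : ℝ :=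
  ((δ.choose l : ℝ))⁻¹ * ∑ s ∈ Finset.powersetCard l (Finset.univ : Finset (Fin δ)),
    ∏ i ∈ s, z i

/-- The polynomial `p(x) = ∑_{l ∈ Δ} c_l x₁^{l₁}⋯x_n^{l_n}` with coefficients `c`,
where `Δ = {0,…,δ₁} × ⋯ × {0,…,δ_n}`. -/
noncomputable def polyOf {n : ℕ} {δ : Fin n → ℕ} (c : (∀ k, Fin (δ k + 1)) → ℝ)
    (x : Fin n → ℝ) : ℝ :=
  ∑ l : ∀ k, Fin (δ k + 1), c l * ∏ k, x k ^ (l k : ℕ)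

/-- The blossom `q(z) = ∑_{l ∈ Δ} c_l ∏_k B_{l_k,δ_k}(z_{k,1},…,z_{k,δ_k})` of the
polynomial with coefficients `c`. -/
noncomputable def blossomOf {n : ℕ} {δ : Fin n → ℕ} (c : (∀ k, Fin (δ k + 1)) → ℝ)
    (z : ∀ k, Fin (δ k) → ℝ) : ℝ :=
  ∑ l : ∀ k, Fin (δ k + 1), c l * ∏ k, normEsymm (δ k) (l k) (z k)

/-- A function of the blocked variables `z = (z_{k,i})` is multi-affine if it is affine
(degree at most 1) in each single argument `z_{k,i}`. -/
def MultiAffineB {n : ℕ} (δ : Fin n → ℕ) (q : (∀ k, Fin (δ k) → ℝ) → ℝ) : Prop :=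
  ∀ (k : Fin n) (i : Fin (δ k)) (z : ∀ k, Fin (δ k) → ℝ) (s t θ : ℝ),
    q (Function.update z k (Function.update (z k) i (θ * s + (1 - θ) * t)))
      = θ * q (Function.update z k (Function.update (z k) i s))
        + (1 - θ) * q (Function.update z k (Function.update (z k) i t))

/-- `z ≅ z'` : each block of `z` is a permutation of the corresponding block of `z'`. -/
def BlockRel {n : ℕ} (δ : Fin n → ℕ) (z z' : ∀ k, Fin (δ k) → ℝ) : Prop :=
  ∀ k, ∃ π : Equiv.Perm (Fin (δ k)), ∀ i, z k i = z' k (π i)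


/-- Euclidean dot product on `ℝ^n`. -/
def dotp {n : ℕ} (u x : Fin n → ℝ) : ℝ := ∑ k, u k * x k

/-- The lifted linear form: for `w ∈ ℝ^n`, `w' · z = ∑_k ∑_i (w k / δ k) * z k i`. -/
noncomputable def aLift {n : ℕ} (δ : Fin n → ℕ) (w : Fin n → ℝ)
    (z : ∀ k, Fin (δ k) → ℝ) : ℝ :=
  ∑ k, ∑ i : Fin (δ k), (w k / (δ k : ℝ)) * z k i

/-- The canonical representative of the equivalence class of vertices of `R'` whose
`k`-th block has exactly `ℓ k` coordinates equal to `hi k`. -/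
noncomputable def vrep {n : ℕ} (δ : Fin n → ℕ) (lo hi : Fin n → ℝ)
    (ℓ : ∀ k, Fin (δ k + 1)) (k : Fin n) (i : Fin (δ k)) : ℝ :=
  if (i : ℕ) < (ℓ k : ℕ) then hi k else lo k

section aux
open Finset

lemma aLift_update {n : ℕ} (δ : Fin n → ℕ) (w : Fin n → ℝ) (z : ∀ k, Fin (δ k) → ℝ)
    (k : Fin n) (i : Fin (δ k)) (v : ℝ) :
    aLift δ w (Function.update z k (Function.update (z k) i v))
      = aLift δ w z + (w k / (δ k : ℝ)) * (v - z k i) := by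
  have h : aLift δ w (Function.update z k (Function.update (z k) i v)) - aLift δ w z
      = (w k / (δ k : ℝ)) * (v - z k i) := by
    unfold aLift
    rw [← Finset.sum_sub_distrib, Finset.sum_eq_single k]
    · rw [Function.update_self, ← Finset.sum_sub_distrib, Finset.sum_eq_single i]
      · rw [Function.update_self]; ring
      · intro j _ hj; rw [Function.update_of_ne hj]; ring
      · simp
    · intro k' _ hk'; rw [Function.update_of_ne hk', sub_self]
    · simp
  linarith

lemma exists_perm_iff' {α : Type*} [Fintype α] [DecidableEq α] {s t : Finset α}
    (h : s.card = t.card) : ∃ π : Equiv.Perm α, ∀ x, x ∈ s ↔ π x ∈ t := by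
  have hc : sᶜ.card = tᶜ.card := by rw [Finset.card_compl, Finset.card_compl, h]
  let e1 : {x // x ∈ s} ≃ {x // x ∈ t} := Finset.equivOfCardEq h
  let e2 : {x // ¬ x ∈ s} ≃ {x // ¬ x ∈ t} :=
    ((Equiv.subtypeEquivRight (q := (· ∈ sᶜ)) (fun x => by simp)).trans
      (Finset.equivOfCardEq hc)).trans (Equiv.subtypeEquivRight (fun x => by simp))
  refine ⟨(Equiv.sumCompl (· ∈ s)).symm.trans ((e1.sumCongr e2).trans
    (Equiv.sumCompl (· ∈ t))), fun x => ?_⟩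
  by_cases hx : x ∈ s
  · simp only [Equiv.trans_apply, Equiv.sumCompl_symm_apply_of_pos hx,
      Equiv.sumCongr_apply, Sum.map_inl, Equiv.sumCompl_apply_inl]
    exact ⟨fun _ => (e1 ⟨x, hx⟩).2, fun _ => hx⟩
  · simp only [Equiv.trans_apply, Equiv.sumCompl_symm_apply_of_neg hx,
      Equiv.sumCongr_apply, Sum.map_inr, Equiv.sumCompl_apply_inr]
    exact ⟨fun hxs => absurd hxs hx, fun hxt => absurd hxt (e2 ⟨x, hx⟩).2⟩

lemma card_filter_lt' (δ m : ℕ) (h : m ≤ δ) :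
    ((univ : Finset (Fin δ)).filter (fun i : Fin δ => (i : ℕ) < m)).card = m := by
  have : ((univ : Finset (Fin δ)).filter (fun i : Fin δ => (i : ℕ) < m))
      = (univ : Finset (Fin m)).map (Fin.castLEEmb h) := by
    ext i
    simp only [mem_filter, mem_univ, true_and, mem_map, Fin.castLEEmb]
    constructor
    · intro hi; exact ⟨⟨i, hi⟩, by simp [Fin.castLE]⟩
    · rintro ⟨j, rfl⟩; simpa [Fin.castLE] using j.2
  rw [this, Finset.card_map, Finset.card_univ, Fintype.card_fin]

lemma aLift_blockRel {n : ℕ} (δ : Fin n → ℕ) (w : Fin n → ℝ)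
    {z z' : ∀ k, Fin (δ k) → ℝ} (h : BlockRel δ z z') :
    aLift δ w z = aLift δ w z' := by
  unfold aLift
  refine Finset.sum_congr rfl fun k _ => ?_
  obtain ⟨π, hπ⟩ := h k
  calc ∑ i, (w k / (δ k : ℝ)) * z k i
      = ∑ i, (w k / (δ k : ℝ)) * z' k (π i) := by
        exact Finset.sum_congr rfl fun i _ => by rw [hπ i]
    _ = ∑ i, (w k / (δ k : ℝ)) * z' k i :=
        Equiv.sum_comp π (fun i => (w k / (δ k : ℝ)) * z' k i)

/-- Every vertex of the box is block-equivalent to a canonical representative. -/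
lemma vertex_blockRel_vrep {n : ℕ} (δ : Fin n → ℕ) (lo hi : Fin n → ℝ)
    (hlt : ∀ k, lo k < hi k) (z : ∀ k, Fin (δ k) → ℝ)
    (hz : ∀ k i, z k i = lo k ∨ z k i = hi k) :
    ∃ ℓ : ∀ k, Fin (δ k + 1), BlockRel δ z (vrep δ lo hi ℓ) := by
  classical
  refine ⟨fun k => ⟨((univ : Finset (Fin (δ k))).filter (fun i => z k i = hi k)).card,
    Nat.lt_succ_of_le (le_trans (Finset.card_filter_le _ _) (by simp))⟩, fun k => ?_⟩
  set s : Finset (Fin (δ k)) := (univ : Finset (Fin (δ k))).filter (fun i => z k i = hi k)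
    with hs
  set m : ℕ := s.card with hm
  have hmle : m ≤ δ k := le_trans (Finset.card_filter_le _ _) (by simp)
  set tset : Finset (Fin (δ k)) :=
    (univ : Finset (Fin (δ k))).filter (fun i : Fin (δ k) => (i : ℕ) < m) with ht
  have hcard : s.card = tset.card := by
    rw [ht, card_filter_lt' _ _ hmle]
  obtain ⟨π, hπ⟩ := exists_perm_iff' hcard
  refine ⟨π, fun i => ?_⟩
  show z k i = vrep δ lo hi _ k (π i)
  unfold vrep
  by_cases hzi : z k i = hi k
  · have : i ∈ s := by simp [hs, hzi]
    have : π i ∈ tset := (hπ i).1 this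
    have hπlt : ((π i : Fin (δ k)) : ℕ) < m := by simpa [ht] using this
    rw [if_pos hπlt, hzi]
  · have hins : i ∉ s := by simp [hs, hzi]
    have : π i ∉ tset := fun hmem => hins ((hπ i).2 hmem)
    have hπlt : ¬ ((π i : Fin (δ k)) : ℕ) < m := by simpa [ht] using this
    rw [if_neg hπlt]
    rcases hz k i with h | h
    · exact h
    · exact absurd h hzi

lemma aLift_diag {n : ℕ} (δ : Fin n → ℕ) (hδ : ∀ k, 1 ≤ δ k) (w : Fin n → ℝ)
    (x : Fin n → ℝ) : aLift δ w (fun k _ => x k) = dotp w x := by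
  unfold aLift dotp
  refine Finset.sum_congr rfl fun k _ => ?_
  rw [Finset.sum_const, Finset.card_univ, Fintype.card_fin, nsmul_eq_mul]
  have hne : (δ k : ℝ) ≠ 0 := by
    have := hδ k; positivity
  field_simp
end aux

lemma multiAffine_bound' {n : ℕ} (δ : Fin n → ℕ) (lo hi : Fin n → ℝ)
    (hlt : ∀ k, lo k < hi k)
    (F : (∀ k, Fin (δ k) → ℝ) → ℝ) (hF : MultiAffineB δ F) (t : ℝ)
    (hvert : ∀ z : ∀ k, Fin (δ k) → ℝ,
      (∀ k i, z k i = lo k ∨ z k i = hi k) → t ≤ F z) :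
    ∀ z : ∀ k, Fin (δ k) → ℝ, (∀ k i, z k i ∈ Set.Icc (lo k) (hi k)) → t ≤ F z := by
  classical
  suffices h : ∀ S : Finset (Σ k, Fin (δ k)), ∀ z : ∀ k, Fin (δ k) → ℝ,
      (∀ k i, z k i ∈ Set.Icc (lo k) (hi k)) →
      (∀ k i, (⟨k, i⟩ : Σ k, Fin (δ k)) ∉ S → z k i = lo k ∨ z k i = hi k) → t ≤ F z by
    intro z hz; exact h univ z hz (fun k i hm => absurd (mem_univ _) hm)
  intro S
  induction S using Finset.induction_on with
  | empty => intro z hz hv; exact hvert z (fun k i => hv k i (notMem_empty _))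
  | @insert a S ha ih =>
    intro z hz hv
    obtain ⟨k, i⟩ := a
    set θ : ℝ := (z k i - lo k) / (hi k - lo k) with hθ
    have hpos : (0:ℝ) < hi k - lo k := sub_pos.2 (hlt k)
    have hzk := hz k i
    have hθ0 : 0 ≤ θ := div_nonneg (by linarith [hzk.1]) hpos.le
    have hθ1 : θ ≤ 1 := (div_le_one hpos).2 (by linarith [hzk.2])
    have hcomb : θ * hi k + (1 - θ) * lo k = z k i := by
      field_simp [hθ]
      have : θ * (hi k - lo k) = z k i - lo k := by rw [hθ]; exact div_mul_cancel₀ _ hpos.ne'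
      linarith
    have key := hF k i z (hi k) (lo k) θ
    rw [hcomb] at key
    have hself : Function.update z k (Function.update (z k) i (z k i)) = z := by
      simp [Function.update_eq_self]
    rw [hself] at key
    have step : ∀ v : ℝ, (v = lo k ∨ v = hi k) →
        t ≤ F (Function.update z k (Function.update (z k) i v)) := by
      intro v hvv
      apply ih
      · intro k' i'
        rcases eq_or_ne k' k with rfl | hk
        · rw [Function.update_self]
          rcases eq_or_ne i' i with rfl | hi'
          · rw [Function.update_self]
            rcases hvv with rfl | rfl
            · exact ⟨le_refl _, (hlt k').le⟩
            · exact ⟨(hlt k').le, le_refl _⟩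
          · rw [Function.update_of_ne hi']; exact hz k' i'
        · rw [Function.update_of_ne hk]; exact hz k' i'
      · intro k' i' hni
        rcases eq_or_ne k' k with rfl | hk
        · rw [Function.update_self]
          rcases eq_or_ne i' i with rfl | hi'
          · rw [Function.update_self]; tauto
          · rw [Function.update_of_ne hi']
            apply hv k' i'
            intro hmem
            rcases Finset.mem_insert.1 hmem with heq | hS
            · apply hi'
              simpa [Sigma.mk.inj_iff] using heq
            · exact hni hS
        · rw [Function.update_of_ne hk]
          apply hv k' i'
          intro hmem
          rcases Finset.mem_insert.1 hmem with heq | hS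
          · exact hk (congrArg Sigma.fst heq)
          · exact hni hS
    have h1 := step (hi k) (Or.inr rfl)
    have h2 := step (lo k) (Or.inl rfl)
    calc t = θ * t + (1 - θ) * t := by ring
      _ ≤ θ * F (Function.update z k (Function.update (z k) i (hi k)))
          + (1 - θ) * F (Function.update z k (Function.update (z k) i (lo k))) :=
        add_le_add (mul_le_mul_of_nonneg_left h1 hθ0)
          (mul_le_mul_of_nonneg_left h2 (by linarith))
      _ = F z := key.symm

/-- Certified lower bound: the optimal value `d*` of the reduced dual LP (D̄)
satisfies `d* ≤ p*`, where `p*` is the optimal value of the polynomial optimization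
problem (P); equivalently, for every feasible point `(t,λ,μ)` of (D̄) and every
feasible `x` of (P), one has `t ≤ p x`. -/
theorem stmt_10 {n mI mJ : ℕ} (δ : Fin n → ℕ) (hδ : ∀ k, 1 ≤ δ k)
    (lo hi : Fin n → ℝ) (hlt : ∀ k, lo k < hi k)
    (p : (Fin n → ℝ) → ℝ) (q : (∀ k, Fin (δ k) → ℝ) → ℝ)
    (hqma : MultiAffineB δ q)
    (hqsym : ∀ z z' : ∀ k, Fin (δ k) → ℝ, BlockRel δ z z' → q z = q z')
    (hqdiag : ∀ x : Fin n → ℝ, q (fun k _ => x k) = p x)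
    (a : Fin mI → Fin n → ℝ) (b : Fin mI → ℝ)
    (c : Fin mJ → Fin n → ℝ) (d : Fin mJ → ℝ)
    (hfeas : ∃ x : Fin n → ℝ, (∀ k, x k ∈ Set.Icc (lo k) (hi k)) ∧
      (∀ i, dotp (a i) x ≤ b i) ∧ (∀ j, dotp (c j) x = d j)) :
    (sSup {t : ℝ | ∃ (lam : Fin mI → ℝ) (mu : Fin mJ → ℝ), (∀ i, 0 ≤ lam i) ∧
        ∀ ℓ : ∀ k, Fin (δ k + 1),
          t ≤ q (vrep δ lo hi ℓ) + ∑ i, lam i * (aLift δ (a i) (vrep δ lo hi ℓ) - b i)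
              + ∑ j, mu j * (aLift δ (c j) (vrep δ lo hi ℓ) - d j)}
      ≤ sInf {y : ℝ | ∃ x : Fin n → ℝ, (∀ k, x k ∈ Set.Icc (lo k) (hi k)) ∧
          (∀ i, dotp (a i) x ≤ b i) ∧ (∀ j, dotp (c j) x = d j) ∧ y = p x})
    ∧
    (∀ (t : ℝ) (lam : Fin mI → ℝ) (mu : Fin mJ → ℝ), (∀ i, 0 ≤ lam i) →
      (∀ ℓ : ∀ k, Fin (δ k + 1),
        t ≤ q (vrep δ lo hi ℓ) + ∑ i, lam i * (aLift δ (a i) (vrep δ lo hi ℓ) - b i)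
            + ∑ j, mu j * (aLift δ (c j) (vrep δ lo hi ℓ) - d j)) →
      ∀ x : Fin n → ℝ, (∀ k, x k ∈ Set.Icc (lo k) (hi k)) →
        (∀ i, dotp (a i) x ≤ b i) → (∀ j, dotp (c j) x = d j) →
        t ≤ p x) := by
  classical
  have hsum : ∀ (m : ℕ) (lamv : Fin m → ℝ) (w : Fin m → Fin n → ℝ) (β : Fin m → ℝ)
      (k : Fin n) (i : Fin (δ k)) (z : ∀ k, Fin (δ k) → ℝ) (s u θ : ℝ),
      ∑ i', lamv i' * (aLift δ (w i')
          (Function.update z k (Function.update (z k) i (θ*s+(1-θ)*u))) - β i')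
      = θ * ∑ i', lamv i' * (aLift δ (w i')
            (Function.update z k (Function.update (z k) i s)) - β i')
        + (1-θ) * ∑ i', lamv i' * (aLift δ (w i')
            (Function.update z k (Function.update (z k) i u)) - β i') := by
    intro m lamv w β k i z s u θ
    rw [Finset.mul_sum, Finset.mul_sum, ← Finset.sum_add_distrib]
    refine Finset.sum_congr rfl fun i' _ => ?_
    rw [aLift_update, aLift_update, aLift_update]
    ring
  have key : ∀ (t : ℝ) (lam : Fin mI → ℝ) (mu : Fin mJ → ℝ), (∀ i, 0 ≤ lam i) →
      (∀ ℓ : ∀ k, Fin (δ k + 1),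
        t ≤ q (vrep δ lo hi ℓ) + ∑ i, lam i * (aLift δ (a i) (vrep δ lo hi ℓ) - b i)
            + ∑ j, mu j * (aLift δ (c j) (vrep δ lo hi ℓ) - d j)) →
      ∀ x : Fin n → ℝ, (∀ k, x k ∈ Set.Icc (lo k) (hi k)) →
        (∀ i, dotp (a i) x ≤ b i) → (∀ j, dotp (c j) x = d j) → t ≤ p x := by
    intro t lam mu hlam hdual x hx hax hcx
    have hFma : MultiAffineB δ (fun z => q z + ∑ i, lam i * (aLift δ (a i) z - b i)
        + ∑ j, mu j * (aLift δ (c j) z - d j)) := by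
      intro k i z s u θ
      simp only []
      rw [hqma k i z s u θ, hsum mI lam a b k i z s u θ, hsum mJ mu c d k i z s u θ]
      ring
    have hvert : ∀ z : ∀ k, Fin (δ k) → ℝ, (∀ k i, z k i = lo k ∨ z k i = hi k) →
        t ≤ q z + ∑ i, lam i * (aLift δ (a i) z - b i)
            + ∑ j, mu j * (aLift δ (c j) z - d j) := by
      intro z hzv
      obtain ⟨ℓ, hbr⟩ := vertex_blockRel_vrep δ lo hi hlt z hzv
      have heq : q z + ∑ i, lam i * (aLift δ (a i) z - b i)
            + ∑ j, mu j * (aLift δ (c j) z - d j)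
          = q (vrep δ lo hi ℓ)
            + ∑ i, lam i * (aLift δ (a i) (vrep δ lo hi ℓ) - b i)
            + ∑ j, mu j * (aLift δ (c j) (vrep δ lo hi ℓ) - d j) := by
        rw [hqsym z _ hbr]
        congr 1
        · congr 1
          exact Finset.sum_congr rfl fun i' _ => by rw [aLift_blockRel δ (a i') hbr]
        · exact Finset.sum_congr rfl fun j' _ => by rw [aLift_blockRel δ (c j') hbr]
      rw [heq]
      exact hdual ℓ
    have hbound := multiAffine_bound' δ lo hi hlt _ hFma t hvert
      (fun k _ => x k) (fun k _ => hx k)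
    simp only [aLift_diag δ hδ, hqdiag] at hbound
    have h1 : ∑ i, lam i * (dotp (a i) x - b i) ≤ 0 :=
      Finset.sum_nonpos fun i _ =>
        mul_nonpos_of_nonneg_of_nonpos (hlam i) (by linarith [hax i])
    have h2 : ∑ j, mu j * (dotp (c j) x - d j) = 0 :=
      Finset.sum_eq_zero fun j _ => by rw [hcx j]; ring
    linarith
  refine ⟨?_, key⟩
  haveI : Nonempty (∀ k, Fin (δ k + 1)) := ⟨fun _ => 0⟩
  set t0 : ℝ := (univ : Finset (∀ k, Fin (δ k + 1))).inf' Finset.univ_nonempty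
    (fun ℓ => q (vrep δ lo hi ℓ)) with ht0
  have ht0mem : t0 ∈ {t : ℝ | ∃ (lam : Fin mI → ℝ) (mu : Fin mJ → ℝ), (∀ i, 0 ≤ lam i) ∧
      ∀ ℓ : ∀ k, Fin (δ k + 1),
        t ≤ q (vrep δ lo hi ℓ) + ∑ i, lam i * (aLift δ (a i) (vrep δ lo hi ℓ) - b i)
            + ∑ j, mu j * (aLift δ (c j) (vrep δ lo hi ℓ) - d j)} := by
    refine ⟨fun _ => 0, fun _ => 0, fun _ => le_rfl, fun ℓ => ?_⟩
    simp only [zero_mul, Finset.sum_const_zero, add_zero]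
    exact Finset.inf'_le _ (mem_univ ℓ)
  obtain ⟨x, hx1, hx2, hx3⟩ := hfeas
  refine le_csInf ⟨p x, x, hx1, hx2, hx3, rfl⟩ ?_
  rintro y ⟨x', hx1', hx2', hx3', rfl⟩
  refine csSup_le ⟨t0, ht0mem⟩ ?_
  rintro s ⟨lam, mu, hlam, hd⟩
  exact key s lam mu hlam hd x' hx1' hx2' hx3'
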